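/- With notation as above, the character of the ℂ*-action on the tangent space T_{W_λ} Sch_λ of the Schubert cell at its fixed point W_λ equals Σ_{u∈λ} q^{-h_λ(u)}, the sum over boxes of λ of q to the minus hook length. -/

import Mathlib

lemma rowLen_le_card (μ : YoungDiagram) (r : ℕ) : μ.rowLen r ≤ μ.card := by
  have h : ∀ c ∈ Finset.range (μ.rowLen r), (r, c) ∈ μ.cells := by
    intro c hc
    rw [YoungDiagram.mem_cells, YoungDiagram.mem_iff_lt_rowLen]
    simpa using hc
  have := Finset.card_le_card_of_injOn (fun c => (r, c)) h (by
    intro x _ y _ hxy; exact (Prod.mk.injEq _ _ _ _ ▸ hxy).2)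
  simpa using this

lemma colLen_le_card (μ : YoungDiagram) (c : ℕ) : μ.colLen c ≤ μ.card := by
  have h : ∀ i ∈ Finset.range (μ.colLen c), (i, c) ∈ μ.cells := by
    intro i hi
    rw [YoungDiagram.mem_cells, YoungDiagram.mem_iff_lt_colLen]
    simpa using hi
  have := Finset.card_le_card_of_injOn (fun i => (i, c)) h (by
    intro x _ y _ hxy; exact (Prod.mk.injEq _ _ _ _ ▸ hxy).1)
  simpa using this

/-- The hook length of the box `c` in the Young diagram `μ`. -/
def hookLength (μ : YoungDiagram) (c : ℕ × ℕ) : ℕ :=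
  (μ.rowLen c.1 - c.2) + (μ.colLen c.2 - c.1) - 1

lemma cells_sum (μ : YoungDiagram) (n : ℕ) (hn : μ.colLen 0 ≤ n) (F : ℕ × ℕ → LaurentPolynomial ℤ) :
    ∑ c ∈ μ.cells, F c = ∑ r ∈ Finset.range n, ∑ c ∈ Finset.range (μ.rowLen r), F (r, c) := by
  rw [Finset.sum_sigma']
  refine Finset.sum_nbij' (fun c => (⟨c.1, c.2⟩ : (_ : ℕ) × ℕ)) (fun p => (p.1, p.2))
    ?_ ?_ ?_ ?_ ?_
  · rintro ⟨r, c⟩ hc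
    rw [YoungDiagram.mem_cells] at hc
    simp only [Finset.mem_sigma, Finset.mem_range]
    refine ⟨lt_of_lt_of_le ?_ hn, YoungDiagram.mem_iff_lt_rowLen.mp hc⟩
    rw [← YoungDiagram.mem_iff_lt_colLen]
    exact μ.up_left_mem le_rfl (Nat.zero_le _) hc
  · rintro ⟨r, c⟩ hp
    simp only [Finset.mem_sigma, Finset.mem_range] at hp
    rw [YoungDiagram.mem_cells, YoungDiagram.mem_iff_lt_rowLen]
    exact hp.2
  · rintro ⟨r, c⟩ _; rfl
  · rintro ⟨r, c⟩ _; rfl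
  · rintro ⟨r, c⟩ _; rfl

/-- For a partition `μ` of `n` with parts `l 0 ≤ … ≤ l (n-1)` (padded by zeros) and
pivots `a i = 2n - l i - (i+1)`, the character of the `ℂ*`-action on the tangent space
`T_{W_λ}Sch_λ = ∏_i Hom(ℂ z^{a_i}, ⟨z^j : a_i < j ≤ 2n-1, j not a pivot a_k, k < i⟩)`
(the monomial `z^m` having weight `q^{-m}`, so each `Hom` line contributes `q^{a_i - j}`)
equals `∑_{u ∈ μ} q^{-h_μ(u)}`. -/
theorem stmt8 (n : ℕ) (μ : YoungDiagram) (hμ : μ.card = n)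
    (l a : ℕ → ℕ) (hl : ∀ i < n, l i = μ.rowLen (n - 1 - i))
    (ha : ∀ i < n, a i = 2 * n - l i - (i + 1)) :
    ∑ i ∈ Finset.range n,
      ∑ j ∈ (Finset.Ioc (a i) (2 * n - 1)).filter (fun j => ∀ k < i, j ≠ a k),
        LaurentPolynomial.T (R := ℤ) ((a i : ℤ) - (j : ℤ)) =
    ∑ c ∈ μ.cells, LaurentPolynomial.T (R := ℤ) (-(hookLength μ c : ℤ)) := by
  have hrow : ∀ r, μ.rowLen r ≤ n := fun r => hμ ▸ rowLen_le_card μ r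
  have hcol : ∀ c, μ.colLen c ≤ n := fun c => hμ ▸ colLen_le_card μ c
  -- formula for a in terms of rowLen
  have haf : ∀ i < n, a i = n + (n - 1 - i) - μ.rowLen (n - 1 - i) := by
    intro i hi
    rw [ha i hi, hl i hi]
    have := hrow (n - 1 - i)
    omega
  -- a is strictly decreasing
  have hastrict : ∀ k1 k2, k1 < k2 → k2 < n → a k2 < a k1 := by
    intro k1 k2 h12 h2
    rw [haf k1 (by omega), haf k2 h2]
    have hmono : μ.rowLen (n - 1 - k1) ≤ μ.rowLen (n - 1 - k2) :=
      μ.rowLen_anti _ _ (by omega)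
    have h1 := hrow (n - 1 - k1)
    have h2' := hrow (n - 1 - k2)
    omega
  rw [cells_sum μ n (hcol 0), ← Finset.sum_range_reflect]
  refine Finset.sum_congr rfl ?_
  intro r hr
  rw [Finset.mem_range] at hr
  set i := n - 1 - r with hi_def
  have hi : i < n := by omega
  have hir : n - 1 - i = r := by omega
  have hai : a i = n + r - μ.rowLen r := by rw [haf i hi, hir]
  have hrn := hrow r
  -- the set equality
  have hS : (Finset.range (μ.rowLen r)).image (fun c => n - 1 - c + μ.colLen c)
      = (Finset.Ioc (a i) (2 * n - 1)).filter (fun j => ∀ k < i, j ≠ a k) := by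
    apply Finset.eq_of_subset_of_card_le
    · intro j hj
      rw [Finset.mem_image] at hj
      obtain ⟨c, hc, rfl⟩ := hj
      rw [Finset.mem_range] at hc
      have hcc : r < μ.colLen c := by
        rw [← YoungDiagram.mem_iff_lt_colLen]
        rw [YoungDiagram.mem_iff_lt_rowLen]
        exact hc
      have hcn := hcol c
      rw [Finset.mem_filter, Finset.mem_Ioc]
      refine ⟨⟨by omega, by omega⟩, ?_⟩
      intro k hk
      have hkn : k < n := by omega
      rw [haf k hkn]
      set s := n - 1 - k with hs_def
      have hrs : r < s := by omega
      have hsn : s < n := by omega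
      have hsr := hrow s
      by_cases hcase : s < μ.colLen c
      · -- (s, c) ∈ μ so c < rowLen s
        have : c < μ.rowLen s := by
          rw [← YoungDiagram.mem_iff_lt_rowLen, YoungDiagram.mem_iff_lt_colLen]
          exact hcase
        omega
      · -- (s, c) ∉ μ so rowLen s ≤ c
        have : μ.rowLen s ≤ c := by
          by_contra hcon
          push_neg at hcon
          rw [← YoungDiagram.mem_iff_lt_rowLen, YoungDiagram.mem_iff_lt_colLen] at hcon
          omega
        omega
    · -- card of filter set ≤ card of image
      have hinj : Set.InjOn (fun c => n - 1 - c + μ.colLen c) (Finset.range (μ.rowLen r)) := by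
        intro c1 h1 c2 h2 heq
        simp only [Finset.coe_range, Set.mem_Iio] at h1 h2
        have heq' : n - 1 - c1 + μ.colLen c1 = n - 1 - c2 + μ.colLen c2 := heq
        have hm : ∀ c1 c2 : ℕ, c1 < c2 → c2 < μ.rowLen r →
            n - 1 - c2 + μ.colLen c2 < n - 1 - c1 + μ.colLen c1 := by
          intro c1 c2 h12 h2'
          have hmono := μ.colLen_anti c1 c2 (le_of_lt h12)
          have hc1 : r < μ.colLen c2 := by
            rw [← YoungDiagram.mem_iff_lt_colLen, YoungDiagram.mem_iff_lt_rowLen]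
            exact h2'
          have := hcol c1
          omega
        rcases lt_trichotomy c1 c2 with h | h | h
        · exact absurd heq' (by have := hm c1 c2 h h2; omega)
        · exact h
        · exact absurd heq' (by have := hm c2 c1 h h1; omega)
      rw [Finset.card_image_of_injOn hinj, Finset.card_range]
      -- filter set = Ioc \ image a (range i)
      have hEsub : (Finset.range i).image a ⊆ Finset.Ioc (a i) (2 * n - 1) := by
        intro x hx
        rw [Finset.mem_image] at hx
        obtain ⟨k, hk, rfl⟩ := hx
        rw [Finset.mem_range] at hk
        rw [Finset.mem_Ioc]
        have := hastrict k i hk hi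
        have hkn : k < n := by omega
        have := haf k hkn
        have := hrow (n - 1 - k)
        omega
      have hfe : (Finset.Ioc (a i) (2 * n - 1)).filter (fun j => ∀ k < i, j ≠ a k)
          = Finset.Ioc (a i) (2 * n - 1) \ (Finset.range i).image a := by
        ext j
        simp only [Finset.mem_filter, Finset.mem_sdiff, Finset.mem_image, Finset.mem_range]
        constructor
        · rintro ⟨hj, h2⟩
          exact ⟨hj, by rintro ⟨k, hk, rfl⟩; exact h2 k hk rfl⟩
        · rintro ⟨hj, h2⟩
          exact ⟨hj, fun k hk hjk => h2 ⟨k, hk, hjk.symm⟩⟩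
      rw [hfe, Finset.card_sdiff_of_subset hEsub, Nat.card_Ioc,
        Finset.card_image_of_injOn (by
          intro k1 hk1 k2 hk2 heq
          simp only [Finset.coe_range, Set.mem_Iio] at hk1 hk2
          rcases lt_trichotomy k1 k2 with h | h | h
          · exact absurd heq (by have := hastrict k1 k2 h (by omega); omega)
          · exact h
          · exact absurd heq (by have := hastrict k2 k1 h (by omega); omega)),
        Finset.card_range]
      omega
  rw [← hS, Finset.sum_image (by
    intro c1 h1 c2 h2 heq
    simp only [Finset.coe_range, Set.mem_Iio, Finset.mem_coe, Finset.mem_range] at h1 h2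
    have heq' : n - 1 - c1 + μ.colLen c1 = n - 1 - c2 + μ.colLen c2 := heq
    have hm : ∀ d1 d2 : ℕ, d1 < d2 → d2 < μ.rowLen r →
        n - 1 - d2 + μ.colLen d2 < n - 1 - d1 + μ.colLen d1 := by
      intro d1 d2 h12 h2'
      have hmono := μ.colLen_anti d1 d2 (le_of_lt h12)
      have hc1 : r < μ.colLen d2 := by
        rw [← YoungDiagram.mem_iff_lt_colLen, YoungDiagram.mem_iff_lt_rowLen]
        exact h2'
      have := hcol d1
      omega
    rcases lt_trichotomy c1 c2 with h | h | h
    · exact absurd heq' (by have := hm c1 c2 h h2; omega)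
    · exact h
    · exact absurd heq' (by have := hm c2 c1 h h1; omega))]
  refine Finset.sum_congr rfl ?_
  intro c hc
  rw [Finset.mem_range] at hc
  have hcc : r < μ.colLen c := by
    rw [← YoungDiagram.mem_iff_lt_colLen, YoungDiagram.mem_iff_lt_rowLen]
    exact hc
  have hcn := hcol c
  congr 1
  simp only [hookLength]
  omega
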